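/- Let (B, Θ) be a category with a structure of nullhomotopies such that Θ satisfies the reduced interchange condition, B has a Θ-strong zero object, and B has Θ-kernels. If an object Y of B is discrete, then for every arrow g : X → Y the Θ-kernel of g is a categorical kernel of g; conversely, the categorical kernel k_g : Ker(g) → X of g, equipped with the canonical nullhomotopy * ∈ Θ(k_g·g), is a Θ-kernel of g. -/
import Mathlib


open CategoryTheory CategoryTheory.Limits

noncomputable section

universe v u

/-- A structure of nullhomotopies `Θ` on a category `B` (Grandis).  We encode the family of
sets `Θ(g)`, for `g : X ⟶ Y`, as a total space `H X Y` together with a projection `ar`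
assigning to every nullhomotopy the arrow on which it lives; thus `Θ(g) = {φ : H X Y // ar φ = g}`.
The maps `f ∘ - ∘ h : Θ(g) → Θ(f·g·h)` are encoded by `act`. -/
structure NullStruct (B : Type u) [Category.{v} B] where
  H : B → B → Type v
  ar : ∀ {X Y : B}, H X Y → (X ⟶ Y)
  act : ∀ {A X Y D : B}, (A ⟶ X) → H X Y → (Y ⟶ D) → H A D
  ar_act : ∀ {A X Y D : B} (f : A ⟶ X) (φ : H X Y) (h : Y ⟶ D),
      ar (act f φ h) = f ≫ ar φ ≫ h
  act_id : ∀ {X Y : B} (φ : H X Y), act (𝟙 X) φ (𝟙 Y) = φ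
  act_comp : ∀ {A' A X Y D D' : B} (f' : A' ⟶ A) (f : A ⟶ X) (φ : H X Y)
      (h : Y ⟶ D) (h' : D ⟶ D'),
      act (f' ≫ f) φ (h ≫ h') = act f' (act f φ h) h'

namespace NullStruct

variable {B : Type u} [Category.{v} B]

/-- The reduced interchange condition: `α ∘ g = f ∘ β` for `α ∈ Θ(f)`, `β ∈ Θ(g)`. -/
def ReducedInterchange (Θ : NullStruct B) : Prop :=
  ∀ {A X Y : B} (f : A ⟶ X) (g : X ⟶ Y) (α : Θ.H A X) (β : Θ.H X Y),
    Θ.ar α = f → Θ.ar β = g → Θ.act (𝟙 A) α g = Θ.act f β (𝟙 Y)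

/-- `(N, n, ν)` is a Θ-kernel of `g`. -/
structure IsKer (Θ : NullStruct B) {N X Y : B} (g : X ⟶ Y) (n : N ⟶ X) (ν : Θ.H N Y) : Prop where
  ar_eq : Θ.ar ν = n ≫ g
  lift : ∀ {A : B} (f : A ⟶ X) (φ : Θ.H A Y), Θ.ar φ = f ≫ g →
    ∃! f' : A ⟶ N, f' ≫ n = f ∧ Θ.act f' ν (𝟙 Y) = φ

/-- `(N, n, ν)` is a strong Θ-kernel of `g`. -/
structure IsStrongKer (Θ : NullStruct B) {N X Y : B} (g : X ⟶ Y) (n : N ⟶ X) (ν : Θ.H N Y)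
    extends NullStruct.IsKer Θ g n ν : Prop where
  liftH : ∀ {A : B} (f : A ⟶ N) (φ : Θ.H A X), Θ.ar φ = f ≫ n →
    Θ.act (𝟙 A) φ g = Θ.act f ν (𝟙 Y) →
    ∃! φ' : Θ.H A N, Θ.ar φ' = f ∧ Θ.act (𝟙 A) φ' n = φ

/-- `(Q, c, γ)` is a Θ-cokernel of `g`. -/
structure IsCoker (Θ : NullStruct B) {X Y Q : B} (g : X ⟶ Y) (c : Y ⟶ Q) (γ : Θ.H X Q) : Prop where
  ar_eq : Θ.ar γ = g ≫ c
  desc : ∀ {D : B} (f : Y ⟶ D) (φ : Θ.H X D), Θ.ar φ = g ≫ f →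
    ∃! f' : Q ⟶ D, c ≫ f' = f ∧ Θ.act (𝟙 X) γ f' = φ

/-- `(Q, c, γ)` is a strong Θ-cokernel of `g`. -/
structure IsStrongCoker (Θ : NullStruct B) {X Y Q : B} (g : X ⟶ Y) (c : Y ⟶ Q) (γ : Θ.H X Q)
    extends NullStruct.IsCoker Θ g c γ : Prop where
  descH : ∀ {D : B} (f : Q ⟶ D) (φ : Θ.H Y D), Θ.ar φ = c ≫ f →
    Θ.act g φ (𝟙 D) = Θ.act (𝟙 X) γ f →
    ∃! φ' : Θ.H Q D, Θ.ar φ' = f ∧ Θ.act c φ' (𝟙 D) = φ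

/-- A Θ-strong zero object: a zero object `Z` such that, for every `X`, the sets of
nullhomotopies `Θ(X ⟶ Z)` and `Θ(Z ⟶ X)` are singletons. -/
structure StrongZero (Θ : NullStruct B) where
  Z : B
  isZero : IsZero Z
  toZ : ∀ X : B, Θ.H X Z
  toZ_uniq : ∀ (X : B) (φ : Θ.H X Z), φ = toZ X
  fromZ : ∀ X : B, Θ.H Z X
  fromZ_uniq : ∀ (X : B) (φ : Θ.H Z X), φ = fromZ X

/-- The zero arrow `X ⟶ Z ⟶ Y` through the Θ-strong zero object. -/
def StrongZero.zero {Θ : NullStruct B} (ζ : Θ.StrongZero) (X Y : B) : X ⟶ Y :=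
  ζ.isZero.from_ X ≫ ζ.isZero.to_ Y

/-- The canonical nullhomotopy `*` on the zero arrow `X ⟶ Z ⟶ Y`. -/
def StrongZero.star {Θ : NullStruct B} (ζ : Θ.StrongZero) (X Y : B) : Θ.H X Y :=
  Θ.act (𝟙 X) (ζ.toZ X) (ζ.isZero.to_ Y)

/-- An object `Y` is discrete: every nullhomotopy with codomain `Y` lives on the zero arrow
and is the canonical one (i.e. `Θ(g) = ∅` if `g ≠ 0`, and `Θ(0) = {*}`). -/
def IsDiscrete {Θ : NullStruct B} (ζ : Θ.StrongZero) (Y : B) : Prop :=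
  ∀ (X : B) (φ : Θ.H X Y), Θ.ar φ = ζ.zero X Y ∧ φ = ζ.star X Y

/-- Codiscrete objects: dual of discrete. -/
def IsCodiscrete {Θ : NullStruct B} (ζ : Θ.StrongZero) (X : B) : Prop :=
  ∀ (Y : B) (φ : Θ.H X Y), Θ.ar φ = ζ.zero X Y ∧ φ = ζ.star X Y

/-- `k` is a categorical kernel of `g` (with respect to the zero arrows through the
Θ-strong zero object). -/
def IsCatKer {Θ : NullStruct B} (ζ : Θ.StrongZero) {K X Y : B} (k : K ⟶ X) (g : X ⟶ Y) : Prop :=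
  k ≫ g = ζ.zero K Y ∧
  ∀ {W : B} (w : W ⟶ X), w ≫ g = ζ.zero W Y → ∃! w' : W ⟶ K, w' ≫ k = w

/-- `(f, φ, g)` is S-exact: any factorization of `(f, φ)` through a Θ-kernel of `g`
belongs to `S`. -/
def SExact (Θ : NullStruct B) (S : ∀ ⦃X Y : B⦄, (X ⟶ Y) → Prop)
    {W X Y : B} (f : W ⟶ X) (φ : Θ.H W Y) (g : X ⟶ Y) : Prop :=
  ∀ {N : B} (n : N ⟶ X) (ν : Θ.H N Y), Θ.IsKer g n ν →
    ∀ (w : W ⟶ N), w ≫ n = f → Θ.act w ν (𝟙 Y) = φ → S w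

/-- `Y` is S-proper relative to the canonical arrow `η : Y ⟶ π₀(Y)`: the canonical
comparison `N(id_Y) ⟶ N(η_Y)` belongs to `S`. -/
def SProper (Θ : NullStruct B) (S : ∀ ⦃X Y : B⦄, (X ⟶ Y) → Prop)
    {Y P : B} (η : Y ⟶ P) : Prop :=
  ∀ {NI : B} (nI : NI ⟶ Y) (νI : Θ.H NI Y), Θ.IsKer (𝟙 Y) nI νI →
  ∀ {NE : B} (nE : NE ⟶ Y) (νE : Θ.H NE P), Θ.IsKer η nE νE →
  ∀ (w : NI ⟶ NE), w ≫ nE = nI → Θ.act w νE (𝟙 P) = Θ.act (𝟙 NI) νI η → S w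

/-- Condition (Sub) on a class `S` of arrows. -/
def CondSub {Θ : NullStruct B} (ζ : Θ.StrongZero) (S : ∀ ⦃X Y : B⦄, (X ⟶ Y) → Prop) : Prop :=
  ∀ ⦃X Y X₀ Y₀ : B⦄ (g : X ⟶ Y) (g₀ : X₀ ⟶ Y₀) (x : X ⟶ X₀) (y : Y ⟶ Y₀),
    g ≫ y = x ≫ g₀ →
    ∀ ⦃Kg Kg₀ Kx Ky : B⦄ (kg : Kg ⟶ X) (kg₀ : Kg₀ ⟶ X₀) (kx : Kx ⟶ X) (ky : Ky ⟶ Y),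
      IsCatKer ζ kg g → IsCatKer ζ kg₀ g₀ → IsCatKer ζ kx x → IsCatKer ζ ky y →
      ∀ (u : Kg ⟶ Kg₀) (v : Kx ⟶ Ky),
        u ≫ kg₀ = kg ≫ x → v ≫ ky = kx ≫ g → S g → S u → S v

end NullStruct

open NullStruct

/-- Lemma: Θ-kernels over a discrete object are categorical kernels.
Let `(B, Θ)` be a category with nullhomotopies satisfying the reduced interchange
condition, with a Θ-strong zero object `ζ` and Θ-kernels.  If `Y` is discrete then, for
every `g : X ⟶ Y`, any Θ-kernel of `g` is a categorical kernel of `g`, and conversely any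
categorical kernel of `g`, equipped with the canonical nullhomotopy `*`, is a Θ-kernel. -/
theorem theta_kernel_eq_categorical_kernel_of_discrete
    {B : Type u} [Category.{v} B] (Θ : NullStruct B)
    (hRI : Θ.ReducedInterchange) (ζ : Θ.StrongZero)
    (hK : ∀ (X Y : B) (g : X ⟶ Y), ∃ (N : B) (n : N ⟶ X) (ν : Θ.H N Y), Θ.IsKer g n ν)
    (Y : B) (hY : IsDiscrete ζ Y) :
    (∀ (X N : B) (g : X ⟶ Y) (n : N ⟶ X) (ν : Θ.H N Y),
        Θ.IsKer g n ν → IsCatKer ζ n g) ∧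
    (∀ (X K : B) (g : X ⟶ Y) (k : K ⟶ X),
        IsCatKer ζ k g → Θ.IsKer g k (ζ.star K Y)) := by
  constructor
  · intro X N g n ν hker
    constructor
    · rw [← hker.ar_eq, (hY N ν).1]
    · intro W w hw
      obtain ⟨w', ⟨hw1, _⟩, huniq⟩ := hker.lift w (ζ.star W Y) (by
        rw [(hY W (ζ.star W Y)).1, hw])
      refine ⟨w', hw1, ?_⟩
      intro y hy
      exact huniq y ⟨hy, ((hY W (Θ.act y ν (𝟙 Y))).2).trans ((hY W (ζ.star W Y)).2).symm⟩
  · intro X K g k hck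
    constructor
    · rw [(hY K (ζ.star K Y)).1, hck.1]
    · intro A f φ hφ
      have hfz : f ≫ g = ζ.zero A Y := by rw [← hφ, (hY A φ).1]
      obtain ⟨f', hf1, huniq⟩ := hck.2 f hfz
      refine ⟨f', ⟨hf1, ((hY A _).2).trans ((hY A φ).2).symm⟩, ?_⟩
      intro y hy
      exact huniq y hy.1
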